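/- arXiv:2510.08154 — 6 statements merged into one kernel-verified Lean document; each statement's English description precedes it below -/
import Mathlib

section
/- Let d, m, n be positive natural numbers and let Φ be a ℂ-linear map from Matrix ((Fin m → Fin d)) ((Fin m → Fin d)) ℂ to Matrix ((Fin n → Fin d)) ((Fin n → Fin d)) ℂ. Then Φ is unitary-equivariant, i.e. for every U in the special unitary group SU(d) and every matrix A one has Φ(U^{⊗m} · A · (U^{⊗m})ᴴ) = U^{⊗n} · Φ(A) · (U^{⊗n})ᴴ, if and only if for every U ∈ SU(d) the Choi matrix C_Φ commutes with the matrix W_U indexed by ((Fin m → Fin d) × (Fin n → Fin d)) whose entries are W_U((i,k),(j,l)) = (∏ t, conj (U (i t) (j t))) · (∏ s, U (k s) (l s)) (i.e. with conj(U)^{⊗m} ⊗ U^{⊗n}). -/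
open Matrix

/-- The `k`-th tensor power of a `d × d` matrix, indexed by functions `Fin k → Fin d`. -/
noncomputable def tensorPow (d k : ℕ) (U : Matrix (Fin d) (Fin d) ℂ) :
    Matrix (Fin k → Fin d) (Fin k → Fin d) ℂ :=
  Matrix.of fun i j => ∏ t, U (i t) (j t)

/-- The Choi matrix of a linear map between matrix spaces. -/
noncomputable def choiMatrix (d m n : ℕ)
    (Φ : Matrix (Fin m → Fin d) (Fin m → Fin d) ℂ →ₗ[ℂ]
         Matrix (Fin n → Fin d) (Fin n → Fin d) ℂ) :
    Matrix ((Fin m → Fin d) × (Fin n → Fin d)) ((Fin m → Fin d) × (Fin n → Fin d)) ℂ :=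
  Matrix.of fun p q => Φ (Matrix.single p.1 q.1 1) p.2 q.2


lemma tensorPow_mul (d k : ℕ) (U V : Matrix (Fin d) (Fin d) ℂ) :
    tensorPow d k (U * V) = tensorPow d k U * tensorPow d k V := by
  ext i j
  simp only [tensorPow, of_apply, mul_apply]
  rw [Finset.prod_univ_sum]
  rw [Fintype.piFinset_univ]
  exact Finset.sum_congr rfl fun f _ => Finset.prod_mul_distrib

lemma tensorPow_conjTranspose (d k : ℕ) (U : Matrix (Fin d) (Fin d) ℂ) :
    tensorPow d k Uᴴ = (tensorPow d k U)ᴴ := by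
  ext i j
  simp only [tensorPow, of_apply, conjTranspose_apply]
  exact (map_prod (starRingEnd ℂ) (fun t => U (j t) (i t)) Finset.univ).symm

lemma tensorPow_one (d k : ℕ) : tensorPow d k (1 : Matrix (Fin d) (Fin d) ℂ) = 1 := by
  ext i j
  simp only [tensorPow, of_apply]
  by_cases h : i = j
  · subst h; simp [Matrix.one_apply]
  · rw [Matrix.one_apply_ne h]
    obtain ⟨t, ht⟩ := Function.ne_iff.mp h
    exact Finset.prod_eq_zero (Finset.mem_univ t) (Matrix.one_apply_ne ht)

lemma star_mem_SU {d : ℕ} {U : Matrix (Fin d) (Fin d) ℂ}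
    (hU : U ∈ Matrix.specialUnitaryGroup (Fin d) ℂ) :
    star U ∈ Matrix.specialUnitaryGroup (Fin d) ℂ := by
  rw [Matrix.mem_specialUnitaryGroup_iff] at hU ⊢
  exact ⟨Unitary.star_mem hU.1,
    by rw [Matrix.star_eq_conjTranspose, Matrix.det_conjTranspose, hU.2, star_one]⟩

lemma tensorPow_mul_conjTranspose {d : ℕ} (k : ℕ) {U : Matrix (Fin d) (Fin d) ℂ}
    (hU : U ∈ Matrix.specialUnitaryGroup (Fin d) ℂ) :
    tensorPow d k U * (tensorPow d k U)ᴴ = 1 := by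
  rw [← tensorPow_conjTranspose, ← tensorPow_mul]
  have h : U * Uᴴ = 1 := by
    have := (Matrix.mem_unitaryGroup_iff).mp hU.1
    rwa [Matrix.star_eq_conjTranspose] at this
  rw [h, tensorPow_one]

lemma tensorPow_conjTranspose_mul {d : ℕ} (k : ℕ) {U : Matrix (Fin d) (Fin d) ℂ}
    (hU : U ∈ Matrix.specialUnitaryGroup (Fin d) ℂ) :
    (tensorPow d k U)ᴴ * tensorPow d k U = 1 := by
  rw [← tensorPow_conjTranspose, ← tensorPow_mul]
  have h : Uᴴ * U = 1 := by
    have := (Matrix.mem_unitaryGroup_iff').mp hU.1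
    rwa [Matrix.star_eq_conjTranspose] at this
  rw [h, tensorPow_one]

lemma mul_stdBasisMatrix_one {I : Type*} [Fintype I] [DecidableEq I]
    (M : Matrix I I ℂ) (i j : I) :
    M * single i j 1 = ∑ a, M a i • single a j (1 : ℂ) := by
  ext a b
  simp [mul_apply, single, Matrix.sum_apply, mul_ite, ite_and, Finset.sum_ite_eq]

lemma stdBasisMatrix_one_mul {I : Type*} [Fintype I] [DecidableEq I]
    (M : Matrix I I ℂ) (i j : I) :
    single i j 1 * M = ∑ b, M j b • single i b (1 : ℂ) := by
  ext a b
  simp [mul_apply, single, Matrix.sum_apply, ite_mul, ite_and, Finset.sum_ite_eq]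

noncomputable def WU (d m n : ℕ) (U : Matrix (Fin d) (Fin d) ℂ) :
    Matrix ((Fin m → Fin d) × (Fin n → Fin d)) ((Fin m → Fin d) × (Fin n → Fin d)) ℂ :=
  Matrix.of fun p q =>
    (∏ t, (starRingEnd ℂ) (U (p.1 t) (q.1 t))) * ∏ s, U (p.2 s) (q.2 s)

section entry
variable (d m n : ℕ)
    (Φ : Matrix (Fin m → Fin d) (Fin m → Fin d) ℂ →ₗ[ℂ]
         Matrix (Fin n → Fin d) (Fin n → Fin d) ℂ)
    (U : Matrix (Fin d) (Fin d) ℂ)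


lemma entryA (i j : Fin m → Fin d) (k l : Fin n → Fin d) :
    (WU d m n U * choiMatrix d m n Φ)  (i,k) (j,l)
      = (tensorPow d n U * Φ ((tensorPow d m U)ᴴ * single i j 1)) k l := by
  rw [mul_stdBasisMatrix_one, map_sum]
  simp only [mul_apply, choiMatrix, WU, of_apply, Matrix.sum_apply, Matrix.smul_apply,
    _root_.map_smul, smul_eq_mul, Fintype.sum_prod_type, conjTranspose_apply, tensorPow,
    Finset.mul_sum, starRingEnd_apply]
  rw [Finset.sum_comm]
  apply Finset.sum_congr rfl
  intro y _
  apply Finset.sum_congr rfl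
  intro x _
  simp only [← starRingEnd_apply]
  rw [map_prod (starRingEnd ℂ)]
  ring

lemma entryB (i j : Fin m → Fin d) (k l : Fin n → Fin d) :
    (choiMatrix d m n Φ * WU d m n U)  (i,k) (j,l)
      = (Φ (single i j 1 * (tensorPow d m U)ᴴ) * tensorPow d n U) k l := by
  rw [stdBasisMatrix_one_mul, map_sum]
  simp only [mul_apply, choiMatrix, WU, of_apply, Matrix.sum_apply, Matrix.smul_apply,
    _root_.map_smul, smul_eq_mul, Fintype.sum_prod_type, conjTranspose_apply, tensorPow,
    Finset.sum_mul, starRingEnd_apply]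
  rw [Finset.sum_comm]
  apply Finset.sum_congr rfl
  intro y _
  apply Finset.sum_congr rfl
  intro x _
  simp only [← starRingEnd_apply]
  rw [map_prod (starRingEnd ℂ)]
  ring

lemma comm_iff :
    (WU d m n U * choiMatrix d m n Φ = choiMatrix d m n Φ * WU d m n U) ↔
    ∀ i j, tensorPow d n U * Φ ((tensorPow d m U)ᴴ * single i j 1)
        = Φ (single i j 1 * (tensorPow d m U)ᴴ) * tensorPow d n U := by
  constructor
  · intro h i j
    ext k l
    rw [← entryA d m n Φ U i j k l, ← entryB d m n Φ U i j k l, h]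
  · intro h
    ext ⟨i,k⟩ ⟨j,l⟩
    rw [entryA d m n Φ U i j k l, entryB d m n Φ U i j k l, h]
end entry


theorem unitary_equivariant_iff_choi_commutes (d m n : ℕ)
    (hd : 0 < d) (hm : 0 < m) (hn : 0 < n)
    (Φ : Matrix (Fin m → Fin d) (Fin m → Fin d) ℂ →ₗ[ℂ]
         Matrix (Fin n → Fin d) (Fin n → Fin d) ℂ) :
    (∀ U : Matrix (Fin d) (Fin d) ℂ, U ∈ Matrix.specialUnitaryGroup (Fin d) ℂ →
      ∀ A : Matrix (Fin m → Fin d) (Fin m → Fin d) ℂ,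
        Φ (tensorPow d m U * A * (tensorPow d m U)ᴴ)
          = tensorPow d n U * Φ A * (tensorPow d n U)ᴴ) ↔
    (∀ U : Matrix (Fin d) (Fin d) ℂ, U ∈ Matrix.specialUnitaryGroup (Fin d) ℂ →
      (Matrix.of fun p q : (Fin m → Fin d) × (Fin n → Fin d) =>
          (∏ t, (starRingEnd ℂ) (U (p.1 t) (q.1 t))) * ∏ s, U (p.2 s) (q.2 s)) *
        choiMatrix d m n Φ
      = choiMatrix d m n Φ *
        (Matrix.of fun p q : (Fin m → Fin d) × (Fin n → Fin d) =>
          (∏ t, (starRingEnd ℂ) (U (p.1 t) (q.1 t))) * ∏ s, U (p.2 s) (q.2 s))) := by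
  constructor
  · intro H U hU
    have hU' := star_mem_SU hU
    show WU d m n U * choiMatrix d m n Φ = choiMatrix d m n Φ * WU d m n U
    rw [comm_iff]
    intro i j
    have h1 := H (star U) hU' (single i j 1 * (tensorPow d m U)ᴴ)
    simp only [Matrix.star_eq_conjTranspose, tensorPow_conjTranspose,
      conjTranspose_conjTranspose] at h1
    have h2 : (tensorPow d m U)ᴴ * (single i j 1 * (tensorPow d m U)ᴴ) * tensorPow d m U
        = (tensorPow d m U)ᴴ * single i j 1 := by
      rw [mul_assoc, mul_assoc, tensorPow_conjTranspose_mul m hU, mul_one]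
    rw [h2] at h1
    rw [h1, ← mul_assoc, ← mul_assoc, tensorPow_mul_conjTranspose n hU, one_mul]
  · intro H U hU A
    have hU' := star_mem_SU hU
    have h := (comm_iff d m n Φ (star U)).mp (H (star U) hU')
    simp only [Matrix.star_eq_conjTranspose, tensorPow_conjTranspose,
      conjTranspose_conjTranspose] at h
    have key : ∀ B, (tensorPow d n U)ᴴ * Φ (tensorPow d m U * B)
        = Φ (B * tensorPow d m U) * (tensorPow d n U)ᴴ := by
      intro B
      induction B using Matrix.induction_on' with
      | h_zero => simp
      | h_add p q hp hq => simp only [mul_add, add_mul, map_add, hp, hq]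
      | h_std_basis i j x =>
        have hx : single i j x = x • single i j (1:ℂ) := by
          rw [smul_single, smul_eq_mul, mul_one]
        rw [hx]
        simp only [Matrix.mul_smul, Matrix.smul_mul, _root_.map_smul]
        rw [h i j]
    have h3 := key (A * (tensorPow d m U)ᴴ)
    rw [← mul_assoc] at h3
    rw [mul_assoc A, tensorPow_conjTranspose_mul m hU, mul_one] at h3
    calc Φ (tensorPow d m U * A * (tensorPow d m U)ᴴ)
        = (tensorPow d n U * (tensorPow d n U)ᴴ)
            * Φ (tensorPow d m U * A * (tensorPow d m U)ᴴ) := by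
          rw [tensorPow_mul_conjTranspose n hU, one_mul]
      _ = tensorPow d n U * (Φ A * (tensorPow d n U)ᴴ) := by rw [mul_assoc, h3]
      _ = tensorPow d n U * Φ A * (tensorPow d n U)ᴴ := by rw [mul_assoc]
end

section
/- Let d, m, n be positive natural numbers and let Φ be a ℂ-linear map from Matrix ((Fin m → Fin d)) ((Fin m → Fin d)) ℂ to Matrix ((Fin n → Fin d)) ((Fin n → Fin d)) ℂ. Then Φ is permutation-invariant, i.e. for every σ ∈ Equiv.Perm (Fin m), τ ∈ Equiv.Perm (Fin n), and every matrix A one has Φ(P_σ · A · P_σᴴ) = Φ(A) and P_τ · Φ(A) · P_τᴴ = Φ(A), if and only if for every σ ∈ Equiv.Perm (Fin m) and τ ∈ Equiv.Perm (Fin n) the Choi matrix C_Φ commutes with the Kronecker product matrix indexed by ((Fin m → Fin d) × (Fin n → Fin d)) with entries ((i,k),(j,l)) ↦ P_σ(i,j) · P_τ(k,l). -/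
open Matrix

/-- Permutation matrix of `σ` acting on `(ℂ^d)^{⊗ι}`, indexed by `ι → Fin d`. -/
noncomputable def permMatrix (d : ℕ) {ι : Type*} [Fintype ι] [DecidableEq ι]
    (σ : Equiv.Perm ι) : Matrix (ι → Fin d) (ι → Fin d) ℂ :=
  Matrix.of fun a b => if a ∘ σ = b then 1 else 0

lemma comp_perm_eq_iff {d : ℕ} {ι : Type*} (σ : Equiv.Perm ι) (a b : ι → Fin d) :
    a ∘ σ = b ↔ a = b ∘ ⇑σ⁻¹ := by
  constructor
  · rintro rfl; ext x; simp
  · rintro rfl; ext x; simp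

lemma permMatrix_apply' (d : ℕ) {ι : Type*} [Fintype ι] [DecidableEq ι]
    (σ : Equiv.Perm ι) (a b : ι → Fin d) :
    permMatrix d σ a b = if a = b ∘ ⇑σ⁻¹ then 1 else 0 := by
  simp [permMatrix, comp_perm_eq_iff]

lemma perm_conj (d : ℕ) {ι : Type*} [Fintype ι] [DecidableEq ι]
    (σ : Equiv.Perm ι) (A : Matrix (ι → Fin d) (ι → Fin d) ℂ) :
    permMatrix d σ * A * (permMatrix d σ)ᴴ =
      Matrix.of fun a b => A (a ∘ σ) (b ∘ σ) := by
  ext a b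
  simp [Matrix.mul_apply, permMatrix, conjTranspose_apply, Finset.sum_ite_eq,
    ite_mul, mul_ite, apply_ite (starRingEnd ℂ)]

@[simp] lemma comp_inv_comp {d : ℕ} {ι : Type*} (σ : Equiv.Perm ι) (a : ι → Fin d) :
    (a ∘ ⇑σ⁻¹) ∘ ⇑σ = a := by ext x; simp

@[simp] lemma comp_comp_inv {d : ℕ} {ι : Type*} (σ : Equiv.Perm ι) (a : ι → Fin d) :
    (a ∘ ⇑σ) ∘ ⇑σ⁻¹ = a := by ext x; simp

lemma stdBasis_comp {d : ℕ} {ι : Type*} [Fintype ι] [DecidableEq ι]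
    (σ : Equiv.Perm ι) (i j : ι → Fin d) :
    (Matrix.of fun a b => single i j (1 : ℂ) (a ∘ ⇑σ) (b ∘ ⇑σ)) =
      single (i ∘ ⇑σ⁻¹) (j ∘ ⇑σ⁻¹) 1 := by
  have h : ∀ a : ι → Fin d, (i = a ∘ ⇑σ) ↔ (i ∘ ⇑σ⁻¹ = a) := by
    intro a; constructor
    · rintro rfl; simp [Function.comp_assoc]
    · rintro rfl; simp [Function.comp_assoc]
  have h' : ∀ b : ι → Fin d, (j = b ∘ ⇑σ) ↔ (j ∘ ⇑σ⁻¹ = b) := by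
    intro b; constructor
    · rintro rfl; simp [Function.comp_assoc]
    · rintro rfl; simp [Function.comp_assoc]
  ext a b
  simp only [of_apply, single, h, h']

lemma perm_conj_stdBasis {d : ℕ} {ι : Type*} [Fintype ι] [DecidableEq ι]
    (σ : Equiv.Perm ι) (i j : ι → Fin d) :
    permMatrix d σ * single i j 1 * (permMatrix d σ)ᴴ =
      single (i ∘ ⇑σ⁻¹) (j ∘ ⇑σ⁻¹) 1 := by
  rw [perm_conj, stdBasis_comp]

lemma phi_sum {d m n : ℕ}
    (Φ : Matrix (Fin m → Fin d) (Fin m → Fin d) ℂ →ₗ[ℂ]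
         Matrix (Fin n → Fin d) (Fin n → Fin d) ℂ)
    (A : Matrix (Fin m → Fin d) (Fin m → Fin d) ℂ) :
    Φ A = ∑ i, ∑ j, A i j • Φ (single i j 1) := by
  conv_lhs => rw [matrix_eq_sum_single A]
  rw [map_sum]
  refine Finset.sum_congr rfl fun i _ => ?_
  rw [map_sum]
  refine Finset.sum_congr rfl fun j _ => ?_
  rw [show single i j (A i j) = A i j • single i j (1:ℂ) by
    rw [smul_single]; simp, _root_.map_smul]

lemma lhs_entry {d m n : ℕ}
    (Φ : Matrix (Fin m → Fin d) (Fin m → Fin d) ℂ →ₗ[ℂ]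
         Matrix (Fin n → Fin d) (Fin n → Fin d) ℂ)
    (σ : Equiv.Perm (Fin m)) (τ : Equiv.Perm (Fin n))
    (i j : Fin m → Fin d) (k l : Fin n → Fin d) :
    ((Matrix.of fun p q : (Fin m → Fin d) × (Fin n → Fin d) =>
        permMatrix d σ p.1 q.1 * permMatrix d τ p.2 q.2) * choiMatrix d m n Φ) (i, k) (j, l)
      = Φ (single (i ∘ ⇑σ) j 1) (k ∘ ⇑τ) l := by
  simp [Matrix.mul_apply, permMatrix, choiMatrix, Fintype.sum_prod_type,
    ite_mul, mul_ite, Finset.sum_ite_eq, Finset.sum_ite_eq']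

lemma rhs_entry {d m n : ℕ}
    (Φ : Matrix (Fin m → Fin d) (Fin m → Fin d) ℂ →ₗ[ℂ]
         Matrix (Fin n → Fin d) (Fin n → Fin d) ℂ)
    (σ : Equiv.Perm (Fin m)) (τ : Equiv.Perm (Fin n))
    (i j : Fin m → Fin d) (k l : Fin n → Fin d) :
    (choiMatrix d m n Φ * (Matrix.of fun p q : (Fin m → Fin d) × (Fin n → Fin d) =>
        permMatrix d σ p.1 q.1 * permMatrix d τ p.2 q.2)) (i, k) (j, l)
      = Φ (single i (j ∘ ⇑σ⁻¹) 1) k (l ∘ ⇑τ⁻¹) := by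
  simp [Matrix.mul_apply, permMatrix_apply', choiMatrix, Fintype.sum_prod_type,
    ite_mul, mul_ite, Finset.sum_ite_eq, Finset.sum_ite_eq']

theorem permutation_invariant_iff_choi_commutes (d m n : ℕ)
    (hd : 0 < d) (hm : 0 < m) (hn : 0 < n)
    (Φ : Matrix (Fin m → Fin d) (Fin m → Fin d) ℂ →ₗ[ℂ]
         Matrix (Fin n → Fin d) (Fin n → Fin d) ℂ) :
    (∀ (σ : Equiv.Perm (Fin m)) (τ : Equiv.Perm (Fin n))
        (A : Matrix (Fin m → Fin d) (Fin m → Fin d) ℂ),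
        Φ (permMatrix d σ * A * (permMatrix d σ)ᴴ) = Φ A ∧
        permMatrix d τ * Φ A * (permMatrix d τ)ᴴ = Φ A) ↔
    (∀ (σ : Equiv.Perm (Fin m)) (τ : Equiv.Perm (Fin n)),
      (Matrix.of fun p q : (Fin m → Fin d) × (Fin n → Fin d) =>
          permMatrix d σ p.1 q.1 * permMatrix d τ p.2 q.2) * choiMatrix d m n Φ
        = choiMatrix d m n Φ *
          (Matrix.of fun p q : (Fin m → Fin d) × (Fin n → Fin d) =>
            permMatrix d σ p.1 q.1 * permMatrix d τ p.2 q.2)) := by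
  constructor
  · intro h σ τ
    ext ⟨i, k⟩ ⟨j, l⟩
    rw [lhs_entry, rhs_entry]
    have h1 := (h σ τ (single (i ∘ ⇑σ) j 1)).1
    rw [perm_conj_stdBasis] at h1
    simp only [comp_comp_inv] at h1
    have h2 := (h σ τ (single (i ∘ ⇑σ) j 1)).2
    rw [perm_conj] at h2
    have h2' := congr_fun (congr_fun h2 k) (l ∘ ⇑τ⁻¹)
    simp only [of_apply, comp_inv_comp] at h2'
    rw [← h1, h1]
    exact h2'
  · intro h
    have key : ∀ (σ : Equiv.Perm (Fin m)) (τ : Equiv.Perm (Fin n))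
        (i j : Fin m → Fin d) (k l : Fin n → Fin d),
        Φ (single (i ∘ ⇑σ) j 1) (k ∘ ⇑τ) l
          = Φ (single i (j ∘ ⇑σ⁻¹) 1) k (l ∘ ⇑τ⁻¹) := by
      intro σ τ i j k l
      have := congr_fun (congr_fun (h σ τ) (i, k)) (j, l)
      rwa [lhs_entry, rhs_entry] at this
    have keyM : ∀ (σ : Equiv.Perm (Fin m)) (i j : Fin m → Fin d),
        Φ (single (i ∘ ⇑σ⁻¹) (j ∘ ⇑σ⁻¹) 1) = Φ (single i j 1) := by
      intro σ i j
      ext k l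
      have := key σ⁻¹ 1 i (j ∘ ⇑σ⁻¹) k l
      simpa [Function.comp_assoc] using this
    have keyT : ∀ (τ : Equiv.Perm (Fin n)) (A : Matrix (Fin m → Fin d) (Fin m → Fin d) ℂ)
        (k l : Fin n → Fin d), Φ A (k ∘ ⇑τ) l = Φ A k (l ∘ ⇑τ⁻¹) := by
      intro τ A k l
      rw [phi_sum Φ A]
      simp only [Matrix.sum_apply, Matrix.smul_apply]
      refine Finset.sum_congr rfl fun i _ => Finset.sum_congr rfl fun j _ => ?_
      have h0 : Φ (single i j 1) (k ∘ ⇑τ) l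
          = Φ (single i j 1) k (l ∘ ⇑τ⁻¹) := by simpa using key 1 τ i j k l
      rw [h0]
    intro σ τ A
    constructor
    · rw [perm_conj, phi_sum Φ (Matrix.of fun a b => A (a ∘ ⇑σ) (b ∘ ⇑σ)), phi_sum Φ A]
      rw [show (∑ i, ∑ j, (Matrix.of fun a b => A (a ∘ ⇑σ) (b ∘ ⇑σ)) i j •
            Φ (single i j 1))
          = ∑ i, ∑ j, A i j • Φ (single (i ∘ ⇑σ⁻¹) (j ∘ ⇑σ⁻¹) 1) from ?_]
      · exact Finset.sum_congr rfl fun i _ => Finset.sum_congr rfl fun j _ => by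
          rw [keyM]
      · refine Fintype.sum_equiv
          ⟨fun f => f ∘ ⇑σ, fun f => f ∘ ⇑σ⁻¹, fun f => by simp [Function.comp_assoc], fun f => by simp [Function.comp_assoc]⟩
          _ _ fun i => ?_
        refine Fintype.sum_equiv
          ⟨fun f => f ∘ ⇑σ, fun f => f ∘ ⇑σ⁻¹, fun f => by simp [Function.comp_assoc], fun f => by simp [Function.comp_assoc]⟩
          _ _ fun j => ?_
        simp [Equiv.coe_fn_mk, Function.comp_assoc]
    · ext k l
      rw [perm_conj]
      show Φ A (k ∘ ⇑τ) (l ∘ ⇑τ) = Φ A k l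
      rw [keyT]
      simp [Function.comp_assoc]
end

section
/- Let d, m, n be positive natural numbers, let σ ∈ Equiv.Perm (Fin (m+n)), and let σ^Γ be the partially transposed permutation matrix, i.e. the matrix indexed by ((Fin m → Fin d) × (Fin n → Fin d)) with entries σ^Γ((a,b),(c,e)) = M_σ((a,e),(c,b)), where M_σ is the permutation matrix of σ on (Fin (m+n) → Fin d) with indices split as (Fin m → Fin d) × (Fin n → Fin d). Then for every U in the special unitary group SU(d), σ^Γ commutes with the matrix indexed by ((Fin m → Fin d) × (Fin n → Fin d)) whose entries are ((i,k),(j,l)) ↦ (∏ t, U (i t) (j t)) · (∏ s, conj (U (k s) (l s))) (i.e. with U^{⊗m} ⊗ conj(U)^{⊗n}). -/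
open Matrix

/-- Permutation matrix of `σ ∈ S_{m+n}` acting on `(ℂ^d)^{⊗(m+n)}`, with indices split as
`(Fin m → Fin d) × (Fin n → Fin d)` via the identification `Fin (m+n) ≃ Fin m ⊕ Fin n`. -/
noncomputable def splitPermMatrix (d m n : ℕ) (σ : Equiv.Perm (Fin (m + n))) :
    Matrix ((Fin m → Fin d) × (Fin n → Fin d)) ((Fin m → Fin d) × (Fin n → Fin d)) ℂ :=
  Matrix.of fun p q =>
    if (Sum.elim p.1 p.2 ∘ finSumFinEquiv.symm) ∘ σ = Sum.elim q.1 q.2 ∘ finSumFinEquiv.symm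
    then 1 else 0

/-- Partial transpose over the last `n` tensor factors. -/
noncomputable def partialTranspose {α β : Type*}
    (X : Matrix (α × β) (α × β) ℂ) : Matrix (α × β) (α × β) ℂ :=
  Matrix.of fun p q => X (p.1, q.2) (q.1, p.2)

open Kronecker

section Aux

/-- Tensor power of a matrix on a function-type index. -/
noncomputable def tp (d k : ℕ) (V : Matrix (Fin d) (Fin d) ℂ) :
    Matrix (Fin k → Fin d) (Fin k → Fin d) ℂ :=
  Matrix.of fun p q => ∏ t, V (p t) (q t)

lemma tp_mul (d k : ℕ) (A B : Matrix (Fin d) (Fin d) ℂ) :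
    tp d k A * tp d k B = tp d k (A * B) := by
  ext p q
  simp only [tp, Matrix.mul_apply, Matrix.of_apply, ← Finset.prod_mul_distrib]
  rw [← Fintype.prod_sum (fun t (x : Fin d) => A (p t) x * B x (q t))]

lemma tp_one (d k : ℕ) : tp d k (1 : Matrix (Fin d) (Fin d) ℂ) = 1 := by
  ext p q
  simp only [tp, Matrix.of_apply, Matrix.one_apply]
  by_cases h : p = q
  · subst h; simp
  · rw [if_neg h]
    obtain ⟨t, ht⟩ := Function.ne_iff.mp h
    exact Finset.prod_eq_zero (Finset.mem_univ t) (by simp [ht])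

lemma tp_transpose (d k : ℕ) (A : Matrix (Fin d) (Fin d) ℂ) :
    (tp d k A)ᵀ = tp d k Aᵀ := by
  ext p q; simp [tp, Matrix.transpose_apply]

variable {α β : Type*} [Fintype α] [Fintype β] [DecidableEq α] [DecidableEq β]

lemma gammaR (A : Matrix α α ℂ) (B : Matrix β β ℂ) (X : Matrix (α × β) (α × β) ℂ) :
    partialTranspose (X * (A ⊗ₖ B)) = (1 ⊗ₖ Bᵀ) * partialTranspose X * (A ⊗ₖ 1) := by
  ext ⟨p1, p2⟩ ⟨q1, q2⟩
  simp only [partialTranspose, Matrix.mul_apply, Fintype.sum_prod_type, Matrix.one_apply,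
    kroneckerMap_apply, Matrix.of_apply, transpose_apply, Finset.mul_sum, Finset.sum_mul,
    ite_mul, one_mul, zero_mul, mul_ite, mul_one, mul_zero, Finset.sum_ite_irrel,
    Finset.sum_const_zero, Finset.sum_ite_eq, Finset.sum_ite_eq', Finset.mem_univ, if_true]
  exact Finset.sum_congr rfl fun x _ => Finset.sum_congr rfl fun y _ => by ring

lemma gammaL (A : Matrix α α ℂ) (B : Matrix β β ℂ) (X : Matrix (α × β) (α × β) ℂ) :
    partialTranspose ((A ⊗ₖ B) * X) = (A ⊗ₖ 1) * partialTranspose X * (1 ⊗ₖ Bᵀ) := by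
  ext ⟨p1, p2⟩ ⟨q1, q2⟩
  simp only [partialTranspose, Matrix.mul_apply, Fintype.sum_prod_type, Matrix.one_apply,
    kroneckerMap_apply, Matrix.of_apply, transpose_apply, Finset.mul_sum, Finset.sum_mul,
    ite_mul, one_mul, zero_mul, mul_ite, mul_one, mul_zero, Finset.sum_ite_irrel,
    Finset.sum_const_zero, Finset.sum_ite_eq, Finset.sum_ite_eq', Finset.mem_univ, if_true]
  exact (Finset.sum_comm (s := (Finset.univ : Finset α)) (t := (Finset.univ : Finset β))
      (f := fun x y => A p1 x * B q2 y * X (x, y) (q1, p2))).trans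
    (Finset.sum_congr rfl fun y _ => Finset.sum_congr rfl fun x _ => by ring)

/-- The splitting equivalence `(Fin m → Fin d) × (Fin n → Fin d) ≃ (Fin (m+n) → Fin d)`. -/
def splitEquiv (d m n : ℕ) :
    ((Fin m → Fin d) × (Fin n → Fin d)) ≃ (Fin (m + n) → Fin d) :=
  (Equiv.sumArrowEquivProdArrow (Fin m) (Fin n) (Fin d)).symm.trans
    (finSumFinEquiv.arrowCongr (Equiv.refl (Fin d)))

lemma splitEquiv_apply (d m n : ℕ) (p : (Fin m → Fin d) × (Fin n → Fin d)) :
    splitEquiv d m n p = Sum.elim p.1 p.2 ∘ finSumFinEquiv.symm := by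
  funext i
  simp [splitEquiv, Equiv.sumArrowEquivProdArrow, Equiv.arrowCongr]

lemma splitPermMatrix_eq (d m n : ℕ) (σ : Equiv.Perm (Fin (m + n)))
    (p q : (Fin m → Fin d) × (Fin n → Fin d)) :
    splitPermMatrix d m n σ p q =
      if splitEquiv d m n p ∘ σ = splitEquiv d m n q then 1 else 0 := by
  rw [splitPermMatrix, splitEquiv_apply, splitEquiv_apply]; rfl

lemma kron_tp_apply' (d m n : ℕ) (V : Matrix (Fin d) (Fin d) ℂ)
    (p q : (Fin m → Fin d) × (Fin n → Fin d)) :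
    (tp d m V ⊗ₖ tp d n V) p q = ∏ i, V (splitEquiv d m n p i) (splitEquiv d m n q i) := by
  simp only [kroneckerMap_apply, tp, Matrix.of_apply, splitEquiv_apply]
  rw [← Equiv.prod_comp finSumFinEquiv]
  simp [Fintype.prod_sum_type]

lemma perm_comm (d m n : ℕ) (σ : Equiv.Perm (Fin (m + n))) (V : Matrix (Fin d) (Fin d) ℂ) :
    splitPermMatrix d m n σ * (tp d m V ⊗ₖ tp d n V)
      = (tp d m V ⊗ₖ tp d n V) * splitPermMatrix d m n σ := by
  ext p q
  rw [Matrix.mul_apply, Matrix.mul_apply]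
  calc
    ∑ r, splitPermMatrix d m n σ p r * (tp d m V ⊗ₖ tp d n V) r q
        = ∑ r, (if splitEquiv d m n p ∘ σ = splitEquiv d m n r then 1 else 0) *
            ∏ i, V (splitEquiv d m n r i) (splitEquiv d m n q i) := by
          refine Finset.sum_congr rfl fun r _ => ?_
          rw [splitPermMatrix_eq, kron_tp_apply']
    _ = ∑ g : Fin (m + n) → Fin d, (if splitEquiv d m n p ∘ σ = g then 1 else 0) *
            ∏ i, V (g i) (splitEquiv d m n q i) :=
          Equiv.sum_comp (splitEquiv d m n) fun g =>
            (if splitEquiv d m n p ∘ σ = g then 1 else 0) * ∏ i, V (g i) (splitEquiv d m n q i)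
    _ = ∏ i, V (splitEquiv d m n p (σ i)) (splitEquiv d m n q i) := by
          simp [ite_mul, Function.comp]
    _ = ∏ i, V (splitEquiv d m n p i) (splitEquiv d m n q (σ.symm i)) := by
          rw [← Equiv.prod_comp σ (fun i => V (splitEquiv d m n p i) (splitEquiv d m n q (σ.symm i)))]
          simp
    _ = ∑ g : Fin (m + n) → Fin d, (∏ i, V (splitEquiv d m n p i) (g i)) *
            (if g ∘ σ = splitEquiv d m n q then 1 else 0) := by
          rw [Finset.sum_eq_single (splitEquiv d m n q ∘ ⇑σ.symm)]
          · have hc : ((splitEquiv d m n) q ∘ ⇑σ.symm) ∘ ⇑σ = (splitEquiv d m n) q := by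
              funext i; simp [Function.comp]
            rw [if_pos hc, mul_one]
            rfl
          · intro g _ hg
            rw [if_neg, mul_zero]
            intro hc
            exact hg (by funext i; simpa using congrFun hc (σ.symm i))
          · intro h; exact absurd (Finset.mem_univ _) h
    _ = ∑ r, (tp d m V ⊗ₖ tp d n V) p r * splitPermMatrix d m n σ r q := by
          rw [← Equiv.sum_comp (splitEquiv d m n) fun g =>
            (∏ i, V (splitEquiv d m n p i) (g i)) * (if g ∘ σ = splitEquiv d m n q then 1 else 0)]
          refine Finset.sum_congr rfl fun r _ => ?_
          rw [splitPermMatrix_eq, kron_tp_apply']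

end Aux

theorem partiallyTransposedPerm_commutes_with_mixed_tensorPow
    (d m n : ℕ) (hd : 0 < d) (hm : 0 < m) (hn : 0 < n)
    (σ : Equiv.Perm (Fin (m + n)))
    (U : Matrix (Fin d) (Fin d) ℂ) (hU : U ∈ Matrix.specialUnitaryGroup (Fin d) ℂ) :
    partialTranspose (splitPermMatrix d m n σ) *
      (Matrix.of fun p q : (Fin m → Fin d) × (Fin n → Fin d) =>
        (∏ t, U (p.1 t) (q.1 t)) * ∏ s, (starRingEnd ℂ) (U (p.2 s) (q.2 s)))
    = (Matrix.of fun p q : (Fin m → Fin d) × (Fin n → Fin d) =>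
        (∏ t, U (p.1 t) (q.1 t)) * ∏ s, (starRingEnd ℂ) (U (p.2 s) (q.2 s))) *
      partialTranspose (splitPermMatrix d m n σ) := by
  have hunit : U ∈ Matrix.unitaryGroup (Fin d) ℂ :=
    (Matrix.mem_specialUnitaryGroup_iff.mp hU).1
  have hUU : U * star U = 1 := Matrix.mem_unitaryGroup_iff.mp hunit
  have hUU' : star U * U = 1 := Matrix.mem_unitaryGroup_iff'.mp hunit
  set M := tp d m U with hM
  set N := tp d n U with hN
  set C := tp d n (U.map (starRingEnd ℂ)) with hC
  set PΓ := partialTranspose (splitPermMatrix d m n σ) with hPΓ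
  have hmapstar : U.map (starRingEnd ℂ) = (star U)ᵀ := by
    ext i j; simp [Matrix.star_eq_conjTranspose, Matrix.map_apply]
  have hW : (Matrix.of fun p q : (Fin m → Fin d) × (Fin n → Fin d) =>
      (∏ t, U (p.1 t) (q.1 t)) * ∏ s, (starRingEnd ℂ) (U (p.2 s) (q.2 s))) = M ⊗ₖ C := by
    ext ⟨p1, p2⟩ ⟨q1, q2⟩
    simp [hM, hC, tp, Matrix.map_apply]
  have hCN : C * Nᵀ = 1 := by
    rw [hC, hN, tp_transpose, tp_mul, hmapstar, ← Matrix.transpose_mul, hUU,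
      Matrix.transpose_one, tp_one]
  have hNC : Nᵀ * C = 1 := by
    rw [hC, hN, tp_transpose, tp_mul, hmapstar, ← Matrix.transpose_mul, hUU',
      Matrix.transpose_one, tp_one]
  have h1 : (1 ⊗ₖ Nᵀ) * PΓ * (M ⊗ₖ 1) = (M ⊗ₖ 1) * PΓ * (1 ⊗ₖ Nᵀ) := by
    rw [hPΓ, ← gammaR, ← gammaL, perm_comm]
  have hid1 : (1 ⊗ₖ C) * ((1 : Matrix (Fin m → Fin d) (Fin m → Fin d) ℂ) ⊗ₖ Nᵀ) = 1 := by
    rw [← Matrix.mul_kronecker_mul, one_mul, hCN, Matrix.one_kronecker_one]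
  have hid2 : ((1 : Matrix (Fin m → Fin d) (Fin m → Fin d) ℂ) ⊗ₖ Nᵀ) * (1 ⊗ₖ C) = 1 := by
    rw [← Matrix.mul_kronecker_mul, one_mul, hNC, Matrix.one_kronecker_one]
  rw [hW]
  calc PΓ * (M ⊗ₖ C)
      = ((1 ⊗ₖ C) * (1 ⊗ₖ Nᵀ)) * PΓ * ((M ⊗ₖ 1) * (1 ⊗ₖ C)) := by
        rw [hid1, one_mul, ← Matrix.mul_kronecker_mul, mul_one, one_mul]
    _ = (1 ⊗ₖ C) * ((1 ⊗ₖ Nᵀ) * PΓ * (M ⊗ₖ 1)) * (1 ⊗ₖ C) := by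
        simp only [Matrix.mul_assoc]
    _ = (1 ⊗ₖ C) * ((M ⊗ₖ 1) * PΓ * (1 ⊗ₖ Nᵀ)) * (1 ⊗ₖ C) := by rw [h1]
    _ = ((1 ⊗ₖ C) * (M ⊗ₖ 1)) * PΓ * ((1 ⊗ₖ Nᵀ) * (1 ⊗ₖ C)) := by
        simp only [Matrix.mul_assoc]
    _ = (M ⊗ₖ C) * PΓ := by
        rw [hid2, mul_one, ← Matrix.mul_kronecker_mul, one_mul, mul_one]
end

section
/- Let d, k be positive natural numbers and let Π_sym^{k,d} = (1/k!) · Σ_{σ ∈ Equiv.Perm (Fin k)} P_σ be the symmetrizer on (ℂ^d)^{⊗k}, a matrix indexed by (Fin k → Fin d). Then the trace of Π_sym^{k,d} equals the binomial coefficient (k + d − 1).choose k, i.e. the dimension of the symmetric subspace of (ℂ^d)^{⊗k}. -/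
open Matrix

attribute [local instance] arrowAction

lemma exists_perm_comp_iff {d k : ℕ} (a b : Fin k → Fin d) :
    (∃ σ : Equiv.Perm (Fin k), a ∘ σ = b) ↔
      ((List.ofFn a : Multiset (Fin d)) = (List.ofFn b : Multiset (Fin d))) := by
  constructor
  · rintro ⟨σ, rfl⟩
    exact Quot.sound (Equiv.Perm.ofFn_comp_perm σ a).symm
  · intro h
    have hperm : (List.ofFn a).Perm (List.ofFn b) := Quotient.exact h
    have h1 : List.ofFn (a ∘ Tuple.sort a) = List.ofFn (b ∘ Tuple.sort b) := by
      apply List.Perm.eq_of_sortedLE ((Tuple.monotone_sort a).sortedLE_ofFn)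
        ((Tuple.monotone_sort b).sortedLE_ofFn)
      exact ((Equiv.Perm.ofFn_comp_perm _ a).trans hperm).trans
        (Equiv.Perm.ofFn_comp_perm _ b).symm
    have h2 : a ∘ Tuple.sort a = b ∘ Tuple.sort b := List.ofFn_injective h1
    refine ⟨(Tuple.sort b).symm.trans (Tuple.sort a), ?_⟩
    funext x
    have := congrFun h2 ((Tuple.sort b).symm x)
    simpa using this

noncomputable def orbitEquivSym (d k : ℕ) :
    MulAction.orbitRel.Quotient (Equiv.Perm (Fin k)) (Fin k → Fin d) ≃ Sym (Fin d) k := by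
  refine Equiv.ofBijective (Quotient.lift
    (fun a : Fin k → Fin d => (⟨(List.ofFn a : Multiset (Fin d)), by simp⟩ : Sym (Fin d) k))
    ?_) ⟨?_, ?_⟩
  · intro a b hab
    obtain ⟨σ, hσ⟩ : ∃ σ : Equiv.Perm (Fin k), b ∘ σ = a := by
      obtain ⟨σ, hσ⟩ := hab
      exact ⟨σ⁻¹, by funext i; exact congrFun hσ i⟩
    have := (exists_perm_comp_iff b a).mp ⟨σ, hσ⟩
    exact Subtype.ext this.symm
  · rintro ⟨a⟩ ⟨b⟩ hab
    apply Quotient.sound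
    have h : (List.ofFn a : Multiset (Fin d)) = (List.ofFn b : Multiset (Fin d)) :=
      congrArg Subtype.val hab
    obtain ⟨σ, hσ⟩ := (exists_perm_comp_iff a b).mpr h
    refine ⟨σ, ?_⟩
    funext i
    show b (σ⁻¹ i) = a i
    rw [← hσ]
    simp
  · rintro ⟨s, hs⟩
    obtain ⟨l, rfl⟩ : ∃ l : List (Fin d), (l : Multiset (Fin d)) = s := ⟨s.toList, by simp⟩
    have hl : l.length = k := by simpa using hs
    refine ⟨Quotient.mk _ (fun i : Fin k => l.get (Fin.cast hl.symm i)), ?_⟩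
    have : List.ofFn (fun i : Fin k => l.get (Fin.cast hl.symm i)) = l := by
      apply List.ext_get (by simp [hl])
      intro n h1 h2
      simp
    exact Subtype.ext (congrArg (fun l : List (Fin d) => (l : Multiset (Fin d))) this)

/-- The symmetrizer (projection onto the symmetric subspace) on `(ℂ^d)^{⊗k}`. -/
noncomputable def symmetrizer (d k : ℕ) :
    Matrix (Fin k → Fin d) (Fin k → Fin d) ℂ :=
  ((k.factorial : ℂ)⁻¹) • ∑ σ : Equiv.Perm (Fin k), permMatrix d σ

lemma trace_permMatrix (d k : ℕ) (σ : Equiv.Perm (Fin k)) :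
    Matrix.trace (permMatrix d σ) =
      (Fintype.card (MulAction.fixedBy (Fin k → Fin d) σ⁻¹) : ℂ) := by
  classical
  have : Matrix.trace (permMatrix d σ) =
      ((Finset.univ.filter fun a : Fin k → Fin d => a ∘ σ = a).card : ℂ) := by
    simp [Matrix.trace, permMatrix, Matrix.diag, Finset.sum_boole]
  rw [this]
  have key : ∀ a : Fin k → Fin d, a ∈ MulAction.fixedBy (Fin k → Fin d) σ⁻¹ ↔ a ∘ σ = a := by
    intro a
    constructor
    · intro h
      have h' : σ⁻¹ • a = a := h
      funext i
      have := congrFun h' i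
      simpa [arrowAction] using (show a (σ⁻¹⁻¹ • i) = a i from this)
    · intro h
      show σ⁻¹ • a = a
      funext i
      exact (show a (σ⁻¹⁻¹ • i) = a i by simpa using congrFun h i)
  have hcard : Fintype.card (MulAction.fixedBy (Fin k → Fin d) σ⁻¹)
      = (Finset.univ.filter fun a : Fin k → Fin d => a ∘ σ = a).card := by
    rw [← Fintype.card_subtype]
    exact Fintype.card_congr (Equiv.subtypeEquivRight key)
  rw [hcard]

theorem trace_symmetrizer (d k : ℕ) (hd : 0 < d) (hk : 0 < k) :
    Matrix.trace (symmetrizer d k) = ((k + d - 1).choose k : ℂ) := by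
  classical
  have burnside := MulAction.sum_card_fixedBy_eq_card_orbits_mul_card_group
    (Equiv.Perm (Fin k)) (Fin k → Fin d)
  rw [Fintype.card_congr (orbitEquivSym d k), Sym.card_sym_eq_choose,
    Fintype.card_perm] at burnside
  simp only [Fintype.card_fin] at burnside
  have hsum : ∑ σ : Equiv.Perm (Fin k), Matrix.trace (permMatrix d σ)
      = ((d + k - 1).choose k * k.factorial : ℂ) := by
    calc ∑ σ : Equiv.Perm (Fin k), Matrix.trace (permMatrix d σ)
        = ∑ σ : Equiv.Perm (Fin k),
            (Fintype.card (MulAction.fixedBy (Fin k → Fin d) σ⁻¹) : ℂ) := by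
          exact Finset.sum_congr rfl fun σ _ => trace_permMatrix d k σ
      _ = ∑ σ : Equiv.Perm (Fin k),
            (Fintype.card (MulAction.fixedBy (Fin k → Fin d) σ) : ℂ) :=
          Fintype.sum_equiv (Equiv.inv _) _ _ (fun σ => rfl)
      _ = (((∑ σ : Equiv.Perm (Fin k),
            Fintype.card (MulAction.fixedBy (Fin k → Fin d) σ) : ℕ)) : ℂ) := by
          push_cast; rfl
      _ = ((d + k - 1).choose k * k.factorial : ℂ) := by rw [burnside]; push_cast; ring
  rw [symmetrizer, Matrix.trace_smul, Matrix.trace_sum, hsum]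
  have hfac : (k.factorial : ℂ) ≠ 0 := Nat.cast_ne_zero.mpr k.factorial_ne_zero
  rw [smul_eq_mul, inv_mul_eq_div, mul_div_assoc, div_self hfac, mul_one]
  congr 2
  omega
end

section
/- Let μ be a Young diagram. For a cell (i,j) ∈ μ write n_r(i,j) = μ.rowLen i − j − 1 (the number of cells of μ strictly to the right of (i,j) in row i) and n_d(i,j) = μ.colLen j − i − 1 (the number of cells of μ strictly below (i,j) in column j). Suppose p : ℕ × ℕ → ℝ satisfies, for every cell (i,j) ∈ μ with n_r(i,j) + n_d(i,j) > 0, the recurrence (n_r(i,j) + n_d(i,j)) · p(i,j) = Σ_{j'} p(i,j') + Σ_{i'} p(i',j), where j' ranges over columns j+1, …, μ.rowLen i − 1 and i' ranges over rows i+1, …, μ.colLen j − 1. If (i,j) and (i,j+1) are both cells of μ and n_d(i,j) = n_d(i,j+1), then p(i,j) = p(i,j+1). -/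
/-- If `p` satisfies the jump-chain recurrence on a Young diagram `μ`, then two horizontally
adjacent cells with the same number of cells below have the same value of `p`. -/
theorem young_recurrence_row_neighbors (μ : YoungDiagram) (p : ℕ × ℕ → ℝ)
    (hrec : ∀ i j : ℕ, (i, j) ∈ μ →
      0 < (μ.rowLen i - j - 1) + (μ.colLen j - i - 1) →
      (((μ.rowLen i - j - 1) + (μ.colLen j - i - 1) : ℕ) : ℝ) * p (i, j)
        = (∑ j' ∈ Finset.Ico (j + 1) (μ.rowLen i), p (i, j'))
          + ∑ i' ∈ Finset.Ico (i + 1) (μ.colLen j), p (i', j))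
    (i j : ℕ) (hij : (i, j) ∈ μ) (hij' : (i, j + 1) ∈ μ)
    (hnd : μ.colLen j - i - 1 = μ.colLen (j + 1) - i - 1) :
    p (i, j) = p (i, j + 1) := by
  have key : ∀ d : ℕ, ∀ i j : ℕ, (i, j) ∈ μ → (i, j + 1) ∈ μ →
      μ.colLen j - i - 1 = μ.colLen (j + 1) - i - 1 →
      μ.colLen j - i - 1 = d → p (i, j) = p (i, j + 1) := by
    intro d
    induction d using Nat.strong_induction_on with
    | _ d IH =>
      intro i j hij hij' hnd hdval
      have hjr : j + 1 < μ.rowLen i := (μ.mem_iff_lt_rowLen).mp hij'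
      have hic' : i < μ.colLen (j + 1) := (μ.mem_iff_lt_colLen).mp hij'
      have hmono : μ.colLen (j + 1) ≤ μ.colLen j := μ.colLen_anti j (j + 1) (by omega)
      have hcc : μ.colLen j = μ.colLen (j + 1) := by omega
      have hic : i < μ.colLen j := by omega
      have h1 := hrec i j hij (by omega)
      by_cases h0 : μ.rowLen i - (j + 1) - 1 + (μ.colLen j - i - 1) = 0
      · -- base case: (i, j+1) is the last cell of its row and column
        have hr2 : μ.rowLen i = j + 2 := by omega
        have hc1 : μ.colLen j = i + 1 := by omega
        rw [hr2, hc1] at h1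
        simp [Finset.sum_Ico_eq_sum_range] at h1
        linarith [h1]
      · have h2 := hrec i (j + 1) hij' (by omega)
        -- column sums agree by the inductive hypothesis
        have hcol : ∑ i' ∈ Finset.Ico (i + 1) (μ.colLen (j + 1)), p (i', j + 1)
            = ∑ i' ∈ Finset.Ico (i + 1) (μ.colLen j), p (i', j) := by
          rw [← hcc]
          refine Finset.sum_congr rfl ?_
          intro i' hi'
          simp only [Finset.mem_Ico] at hi'
          exact (IH (μ.colLen j - i' - 1) (by omega) i' j
            ((μ.mem_iff_lt_colLen).mpr (by omega))
            ((μ.mem_iff_lt_colLen).mpr (by omega))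
            (by omega) rfl).symm
        rw [hcol] at h2
        rw [Finset.sum_eq_sum_Ico_succ_bot (by omega : j + 1 < μ.rowLen i)] at h1
        have hcoef : μ.rowLen i - j - 1 + (μ.colLen j - i - 1)
            = (μ.rowLen i - (j + 1) - 1 + (μ.colLen (j + 1) - i - 1)) + 1 := by omega
        rw [hcoef] at h1
        push_cast at h1 h2
        have hn : ((μ.rowLen i - (j + 1) - 1 + (μ.colLen (j + 1) - i - 1) : ℕ) : ℝ) + 1 ≠ 0 :=
          by positivity
        refine mul_left_cancel₀ hn ?_
        push_cast
        linear_combination h1 - h2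
  exact key _ i j hij hij' hnd rfl
end

section
/- Let μ be a Young diagram. For a cell (i,j) ∈ μ write n_r(i,j) = μ.rowLen i − j − 1 (the number of cells of μ strictly to the right of (i,j) in row i) and n_d(i,j) = μ.colLen j − i − 1 (the number of cells of μ strictly below (i,j) in column j). Suppose p : ℕ × ℕ → ℝ satisfies, for every cell (i,j) ∈ μ with n_r(i,j) + n_d(i,j) > 0, the recurrence (n_r(i,j) + n_d(i,j)) · p(i,j) = Σ_{j'} p(i,j') + Σ_{i'} p(i',j), where j' ranges over columns j+1, …, μ.rowLen i − 1 and i' ranges over rows i+1, …, μ.colLen j − 1. If (i,j) and (i+1,j) are both cells of μ and n_r(i,j) = n_r(i+1,j), then p(i,j) = p(i+1,j). -/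
/-- If `p` satisfies the jump-chain recurrence on a Young diagram `μ`, then two vertically
adjacent cells with the same number of cells to the right have the same value of `p`. -/
theorem young_recurrence_column_neighbors (μ : YoungDiagram) (p : ℕ × ℕ → ℝ)
    (hrec : ∀ i j : ℕ, (i, j) ∈ μ →
      0 < (μ.rowLen i - j - 1) + (μ.colLen j - i - 1) →
      (((μ.rowLen i - j - 1) + (μ.colLen j - i - 1) : ℕ) : ℝ) * p (i, j)
        = (∑ j' ∈ Finset.Ico (j + 1) (μ.rowLen i), p (i, j'))
          + ∑ i' ∈ Finset.Ico (i + 1) (μ.colLen j), p (i', j))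
    (i j : ℕ) (hij : (i, j) ∈ μ) (hij' : (i + 1, j) ∈ μ)
    (hnr : μ.rowLen i - j - 1 = μ.rowLen (i + 1) - j - 1) :
    p (i, j) = p (i + 1, j) := by
  have hjL0 : j < μ.rowLen i := YoungDiagram.mem_iff_lt_rowLen.mp hij
  have hjL0' : j < μ.rowLen (i + 1) := YoungDiagram.mem_iff_lt_rowLen.mp hij'
  have hLeq : μ.rowLen (i + 1) = μ.rowLen i := by omega
  suffices H : ∀ r j', (i, j') ∈ μ → (i + 1, j') ∈ μ →
      μ.rowLen i - j' - 1 = r → p (i, j') = p (i + 1, j') from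
    H _ j hij hij' rfl
  intro r
  induction r using Nat.strong_induction_on with
  | _ r ih =>
    intro j hj hj' hr
    have hjL : j < μ.rowLen i := YoungDiagram.mem_iff_lt_rowLen.mp hj
    have hC : i + 1 < μ.colLen j := YoungDiagram.mem_iff_lt_colLen.mp hj'
    have eq1 := hrec i j hj (by omega)
    have hrow : ∑ j' ∈ Finset.Ico (j + 1) (μ.rowLen i), p (i, j')
        = ∑ j' ∈ Finset.Ico (j + 1) (μ.rowLen i), p (i + 1, j') := by
      apply Finset.sum_congr rfl
      intro j' hj'mem
      rw [Finset.mem_Ico] at hj'mem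
      exact ih (μ.rowLen i - j' - 1) (by omega) j'
        (YoungDiagram.mem_iff_lt_rowLen.mpr (by omega))
        (YoungDiagram.mem_iff_lt_rowLen.mpr (by omega)) rfl
    rw [hrow, Finset.sum_eq_sum_Ico_succ_bot hC] at eq1
    by_cases hcase : 0 < r + (μ.colLen j - (i + 1) - 1)
    · have eq2 := hrec (i + 1) j hj' (by omega)
      rw [hLeq] at eq2
      set B : ℝ := ((μ.colLen j - (i + 1) - 1 : ℕ) : ℝ) with hB
      have e1 : ((μ.rowLen i - j - 1 + (μ.colLen j - i - 1) : ℕ) : ℝ)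
          = (r : ℝ) + B + 1 := by
        have h : μ.rowLen i - j - 1 + (μ.colLen j - i - 1)
            = r + (μ.colLen j - (i + 1) - 1) + 1 := by omega
        rw [h]; push_cast; ring
      have e2 : ((μ.rowLen i - j - 1 + (μ.colLen j - (i + 1) - 1) : ℕ) : ℝ)
          = (r : ℝ) + B := by
        have h : μ.rowLen i - j - 1 + (μ.colLen j - (i + 1) - 1)
            = r + (μ.colLen j - (i + 1) - 1) := by omega
        rw [h]; push_cast; ring
      rw [e1] at eq1
      rw [e2] at eq2
      have hpos : (0 : ℝ) < (r : ℝ) + B + 1 := by positivity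
      have key : ((r : ℝ) + B + 1) * p (i, j) = ((r : ℝ) + B + 1) * p (i + 1, j) := by
        have := eq2
        nlinarith [eq1, eq2]
      exact mul_left_cancel₀ (ne_of_gt hpos) key
    · have h0 : μ.rowLen i = j + 1 := by omega
      have h1 : μ.colLen j = i + 2 := by omega
      rw [h0, h1] at eq1
      simp at eq1
      linarith
end
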